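/- Let Y be a topological space and let 𝒰 be an open cover of Y. If two paths a, b : [0,1] → Y with the same endpoints are homotopic relative to their endpoints, then a and b are 𝒰-equivalent. -/

import Mathlib

open unitInterval

/-- `a` is a reparametrization of `c`: `a` is the precomposition of `c` with a continuous
weakly monotone surjection of `[0,1]` fixing `0` and `1`. -/
def IsReparamOf {Y : Type*} [TopologicalSpace Y] {x y : Y} (a c : Path x y) : Prop :=
  ∃ f : I → I, Continuous f ∧ Monotone f ∧ Function.Surjective f ∧
    f 0 = 0 ∧ f 1 = 1 ∧ ∀ t, a t = c (f t)

/-- Two paths with the same endpoints are `𝒰`-contiguous if they are reparametrizations of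
concatenations `u + a' + v` and `u + b' + v` where the images of `a'` and `b'` are both
contained in a single member of `𝒰`. -/
def UContiguous {Y : Type*} [TopologicalSpace Y] (𝒰 : Set (Set Y)) {x y : Y}
    (a b : Path x y) : Prop :=
  ∃ (p q : Y) (u : Path x p) (a' b' : Path p q) (v : Path q y) (U : Set Y),
    U ∈ 𝒰 ∧ Set.range a' ∪ Set.range b' ⊆ U ∧
    IsReparamOf a ((u.trans a').trans v) ∧ IsReparamOf b ((u.trans b').trans v)

/-- `𝒰`-equivalence: the reflexive–transitive closure of `𝒰`-contiguity. -/
def UEquiv {Y : Type*} [TopologicalSpace Y] (𝒰 : Set (Set Y)) {x y : Y}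
    (a b : Path x y) : Prop :=
  Relation.ReflTransGen (UContiguous 𝒰) a b

noncomputable def pj (t : ℝ) : I := Set.projIcc 0 1 zero_le_one t

lemma pj_coe {t : ℝ} (h0 : 0 ≤ t) (h1 : t ≤ 1) : ((pj t : I) : ℝ) = t := by
  rw [pj, Set.coe_projIcc, min_eq_right h1, max_eq_right h0]

lemma pj_coe' (t : I) : pj (t : ℝ) = t := by
  ext
  exact pj_coe t.2.1 t.2.2

lemma continuous_pj : Continuous pj := by unfold pj; exact continuous_projIcc

lemma monotone_pj : Monotone pj := fun _ _ h => Set.monotone_projIcc zero_le_one h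

lemma pj_zero : pj 0 = 0 := by ext; rw [pj_coe le_rfl zero_le_one]; simp

lemma pj_one : pj 1 = 1 := by ext; rw [pj_coe zero_le_one le_rfl]; simp

noncomputable def lineI (r s : I) (w : I) : I := pj ((1 - (w : ℝ)) * r + w * s)

lemma lineI_coe (r s w : I) : ((lineI r s w : I) : ℝ) = (1 - (w : ℝ)) * r + w * s := by
  have h0 := w.2.1; have h1 := w.2.2
  have hr0 := r.2.1; have hr1 := r.2.2
  have hs0 := s.2.1; have hs1 := s.2.2
  apply pj_coe <;> nlinarith

lemma lineI_zero (r s : I) : lineI r s 0 = r := by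
  ext; rw [lineI_coe]; simp

lemma lineI_one (r s : I) : lineI r s 1 = s := by
  ext; rw [lineI_coe]; simp

lemma continuous_lineI (r s : I) : Continuous (lineI r s) :=
  continuous_pj.comp (by fun_prop)

section segs

variable {Y : Type*} [TopologicalSpace Y] {x y : Y}

/-- middle segment of a path -/
noncomputable def seg (p : Path x y) (r s : I) : Path (p r) (p s) where
  toFun w := p (lineI r s w)
  continuous_toFun := p.continuous.comp (continuous_lineI r s)
  source' := by show p (lineI r s 0) = p r; rw [lineI_zero]
  target' := by show p (lineI r s 1) = p s; rw [lineI_one]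

/-- initial segment -/
noncomputable def seg0 (p : Path x y) (r : I) : Path x (p r) where
  toFun w := p (lineI 0 r w)
  continuous_toFun := p.continuous.comp (continuous_lineI 0 r)
  source' := by show p (lineI 0 r 0) = x; rw [lineI_zero]; exact p.source
  target' := by show p (lineI 0 r 1) = p r; rw [lineI_one]

/-- final segment -/
noncomputable def seg1 (p : Path x y) (s : I) : Path (p s) y where
  toFun w := p (lineI s 1 w)
  continuous_toFun := p.continuous.comp (continuous_lineI s 1)
  source' := by show p (lineI s 1 0) = p s; rw [lineI_zero]
  target' := by show p (lineI s 1 1) = y; rw [lineI_one]; exact p.target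

@[simp] lemma seg_apply (p : Path x y) (r s w : I) : seg p r s w = p (lineI r s w) := rfl
@[simp] lemma seg0_apply (p : Path x y) (r w : I) : seg0 p r w = p (lineI 0 r w) := rfl
@[simp] lemma seg1_apply (p : Path x y) (s w : I) : seg1 p s w = p (lineI s 1 w) := rfl

end segs

lemma monotone_ite {f g : ℝ → ℝ} {c : ℝ} (hf : Monotone f) (hg : Monotone g)
    (hfg : f c ≤ g c) : Monotone (fun t => if t ≤ c then f t else g t) := by
  intro p q hpq
  by_cases hp : p ≤ c <;> by_cases hq : q ≤ c <;>
    simp only [hp, hq, if_true, if_false]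
  · exact hf hpq
  · exact le_trans (hf hp) (le_trans hfg (hg (le_of_not_ge hq)))
  · exact absurd (le_trans hpq hq) hp
  · exact hg hpq

lemma trans_apply_pj {Y : Type*} [TopologicalSpace Y] {x y z : Y}
    (γ : Path x y) (γ' : Path y z) (t : I) :
    (γ.trans γ') t = if (t : ℝ) ≤ 1/2 then γ (pj (2 * t)) else γ' (pj (2 * t - 1)) := by
  rw [Path.trans_apply]
  split_ifs with h
  · congr 1; ext
    exact (pj_coe (by linarith [t.2.1]) (by linarith)).symm
  · congr 1; ext
    exact (pj_coe (by linarith) (by linarith [t.2.2])).symm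

/-- evaluation of a double concatenation -/
lemma trans_trans_apply {Y : Type*} [TopologicalSpace Y] {x y P Q : Y}
    (u : Path x P) (m : Path P Q) (v : Path Q y) (t : I) :
    ((u.trans m).trans v) t =
      if (t : ℝ) ≤ 1/4 then u (pj (4 * t))
      else if (t : ℝ) ≤ 1/2 then m (pj (4 * t - 1))
      else v (pj (2 * t - 1)) := by
  rcases le_or_gt (t : ℝ) (1/2) with h | h
  · rw [trans_apply_pj, if_pos h, trans_apply_pj,
      pj_coe (by linarith [t.2.1]) (by linarith)]
    rcases le_or_gt (t : ℝ) (1/4) with h2 | h2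
    · rw [if_pos (by linarith), if_pos h2]
      congr 2; ring
    · rw [if_neg (by linarith), if_neg (by linarith), if_pos h]
      congr 2; ring
  · rw [trans_apply_pj, if_neg (by linarith), if_neg (by linarith), if_neg (by linarith)]

/-- The core reparametrization lemma: if `u`, `m`, `v` are (affine versions of) the
restrictions of `p` to `[0,r]`, `[r,s]`, `[s,1]` with `0 < r < s < 1`, then `p` is a
reparametrization of `(u.trans m).trans v`. -/
lemma reparam_triple {Y : Type*} [TopologicalSpace Y] {x y P Q : Y}
    (p : Path x y) (u : Path x P) (m : Path P Q) (v : Path Q y)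
    {r s : I} (hr : 0 < (r : ℝ)) (hrs : (r : ℝ) < s) (hs : (s : ℝ) < 1)
    (hu : ∀ w, u w = p (lineI 0 r w)) (hm : ∀ w, m w = p (lineI r s w))
    (hv : ∀ w, v w = p (lineI s 1 w)) :
    IsReparamOf p ((u.trans m).trans v) := by
  set R : ℝ := (r : ℝ) with hR
  set S : ℝ := (s : ℝ) with hS
  have hc1 : (0:ℝ) < 4*R := by linarith
  have hc2 : (0:ℝ) < 4*(S - R) := by linarith
  have hc3 : (0:ℝ) < 2*(1 - S) := by linarith
  set gr : ℝ → ℝ := fun t =>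
    if t ≤ R then t / (4*R)
    else if t ≤ S then 1/4 + (t - R) / (4*(S - R))
    else 1/2 + (t - S) / (2*(1 - S)) with hgr
  have e1 : R / (4*R) = 1/4 := by rw [div_eq_iff hc1.ne']; ring
  have e2 : 1/4 + (S - R) / (4*(S - R)) = 1/2 := by
    rw [show (S - R) / (4*(S - R)) = 1/4 by rw [div_eq_iff hc2.ne']; ring]
    norm_num
  have e3 : 1/2 + ((1:ℝ) - S) / (2*(1 - S)) = 1 := by
    rw [show ((1:ℝ) - S) / (2*(1 - S)) = 1/2 by rw [div_eq_iff hc3.ne']; ring]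
    norm_num
  have m1 : Monotone (fun t : ℝ => t / (4*R)) := fun a b hab => by
    dsimp only; gcongr
  have m2 : Monotone (fun t : ℝ => 1/4 + (t - R) / (4*(S - R))) := fun a b hab => by
    dsimp only; gcongr
  have m3 : Monotone (fun t : ℝ => 1/2 + (t - S) / (2*(1 - S))) := fun a b hab => by
    dsimp only; gcongr
  have hmono : Monotone gr := by
    apply monotone_ite m1 (monotone_ite m2 m3 (by rw [e2, sub_self, zero_div, add_zero]))
    rw [if_pos hrs.le, e1, sub_self, zero_div, add_zero]
  have hcont : Continuous gr := by
    refine Continuous.if_le ?_ ?_ continuous_id continuous_const ?_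
    · fun_prop
    · refine Continuous.if_le ?_ ?_ continuous_id continuous_const ?_
      · fun_prop
      · fun_prop
      · intro t ht
        rw [ht, e2, sub_self, zero_div, add_zero]
    · intro t ht
      rw [ht, if_pos hrs.le, e1, sub_self, zero_div, add_zero]
  have hgr0 : gr 0 = 0 := by
    rw [hgr]
    simp only [if_pos (by linarith : (0:ℝ) ≤ R), zero_div]
  have hgr1 : gr 1 = 1 := by
    rw [hgr]
    simp only [if_neg (by linarith : ¬ (1:ℝ) ≤ R), if_neg (by linarith : ¬ (1:ℝ) ≤ S)]
    rw [e3]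
  have hbdd : ∀ t : I, 0 ≤ gr t ∧ gr t ≤ 1 := fun t => by
    constructor
    · rw [← hgr0]; exact hmono t.2.1
    · rw [← hgr1]; exact hmono t.2.2
  set f : I → I := fun τ => pj (gr τ) with hf
  have hfcoe : ∀ τ : I, ((f τ : I) : ℝ) = gr τ := fun τ =>
    pj_coe (hbdd τ).1 (hbdd τ).2
  refine ⟨f, ?_, ?_, ?_, ?_, ?_, ?_⟩
  · exact continuous_pj.comp (hcont.comp continuous_subtype_val)
  · exact fun a b hab => monotone_pj (hmono hab)
  · intro z
    have hsub := intermediate_value_Icc (zero_le_one (α := ℝ)) hcont.continuousOn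
    rw [hgr0, hgr1] at hsub
    obtain ⟨t, ht, hgt⟩ := hsub ⟨z.2.1, z.2.2⟩
    exact ⟨⟨t, ht⟩, by rw [hf]; simp only; rw [hgt, pj_coe' z]⟩
  · ext; rw [hfcoe 0, Set.Icc.coe_zero, hgr0]
  · ext; rw [hfcoe 1, Set.Icc.coe_one, hgr1]
  · intro τ
    rw [trans_trans_apply]
    set T : ℝ := (τ : ℝ) with hT
    have hT0 : 0 ≤ T := τ.2.1
    have hT1 : T ≤ 1 := τ.2.2
    rcases le_or_gt T R with h1 | h1
    · have hgv : gr τ = T / (4*R) := by rw [hgr]; simp only [← hT, if_pos h1]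
      have hb : T / (4*R) ≤ 1/4 := by rw [div_le_iff₀ hc1]; linarith
      have hb0 : 0 ≤ T / (4*R) := div_nonneg hT0 hc1.le
      have hfv : ((f τ : I) : ℝ) = T / (4*R) := by rw [hfcoe, hgv]
      rw [if_pos (by rw [hfv]; linarith : ((f τ : I) : ℝ) ≤ 1/4)]
      rw [hu]
      congr 1
      ext
      rw [lineI_coe, pj_coe (by rw [hfv]; linarith) (by rw [hfv]; linarith), hfv,
        Set.Icc.coe_zero, ← hR]
      field_simp
      rw [hT]
      ring
    · rcases le_or_gt T S with h2 | h2
      · have hgv : gr τ = 1/4 + (T - R) / (4*(S - R)) := by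
          rw [hgr]; simp only [← hT, if_neg (not_le.mpr h1), if_pos h2]
        have hb0 : 0 ≤ (T - R) / (4*(S - R)) := div_nonneg (by linarith) hc2.le
        have hb : (T - R) / (4*(S - R)) ≤ 1/4 := by rw [div_le_iff₀ hc2]; linarith
        have hbs : 0 < (T - R) / (4*(S - R)) ∨ True := Or.inr trivial
        have hfv : ((f τ : I) : ℝ) = 1/4 + (T - R) / (4*(S - R)) := by rw [hfcoe, hgv]
        have hpos : 0 < (T - R) / (4*(S - R)) := div_pos (by linarith) hc2
        rw [if_neg (by rw [hfv]; linarith : ¬ ((f τ : I) : ℝ) ≤ 1/4),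
          if_pos (by rw [hfv]; linarith : ((f τ : I) : ℝ) ≤ 1/2)]
        rw [hm]
        congr 1
        ext
        rw [lineI_coe, pj_coe (by rw [hfv]; linarith) (by rw [hfv]; linarith), hfv,
          ← hR, ← hS]
        have hne : S - R ≠ 0 := by linarith
        field_simp
        ring
      · have hgv : gr τ = 1/2 + (T - S) / (2*(1 - S)) := by
          rw [hgr]; simp only [← hT, if_neg (not_le.mpr h1), if_neg (not_le.mpr h2)]
        have hpos : 0 < (T - S) / (2*(1 - S)) := div_pos (by linarith) hc3
        have hb : (T - S) / (2*(1 - S)) ≤ 1/2 := by rw [div_le_iff₀ hc3]; linarith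
        have hfv : ((f τ : I) : ℝ) = 1/2 + (T - S) / (2*(1 - S)) := by rw [hfcoe, hgv]
        rw [if_neg (by rw [hfv]; linarith : ¬ ((f τ : I) : ℝ) ≤ 1/4),
          if_neg (by rw [hfv]; linarith : ¬ ((f τ : I) : ℝ) ≤ 1/2)]
        rw [hv]
        congr 1
        ext
        rw [lineI_coe, pj_coe (by rw [hfv]; linarith) (by rw [hfv]; linarith), hfv,
          Set.Icc.coe_one, ← hS]
        have hne : (1:ℝ) - S ≠ 0 := by linarith
        field_simp
        ring

/-! ### The standard pause reparametrization `W` -/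

lemma pj_nonpos {t : ℝ} (h : t ≤ 0) : pj t = 0 := by
  ext
  rw [pj, Set.coe_projIcc, Set.Icc.coe_zero]
  exact max_eq_left ((min_le_right 1 t).trans h)

lemma pj_ge_one {t : ℝ} (h : 1 ≤ t) : pj t = 1 := by
  ext
  rw [pj, Set.coe_projIcc, Set.Icc.coe_one, min_eq_left h]
  norm_num

noncomputable def W (t : I) : I := pj (2 * t - 1/2)

lemma W_continuous : Continuous W := continuous_pj.comp (by fun_prop)

lemma W_monotone : Monotone W := fun a b hab => by
  apply monotone_pj
  have : (a:ℝ) ≤ b := hab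
  linarith

lemma W_zero : W 0 = 0 := by
  rw [W]
  apply pj_nonpos
  rw [Set.Icc.coe_zero]
  norm_num

lemma W_one : W 1 = 1 := by
  rw [W]
  apply pj_ge_one
  rw [Set.Icc.coe_one]
  norm_num

lemma W_surjective : Function.Surjective W := by
  intro z
  have hz0 := z.2.1; have hz1 := z.2.2
  refine ⟨⟨(z:ℝ)/2 + 1/4, by constructor <;> linarith⟩, ?_⟩
  ext
  rw [W, pj_coe (by norm_num; linarith) (by norm_num; linarith)]
  ring

lemma W_coe (t : I) (h1 : 1/4 ≤ (t:ℝ)) (h2 : (t:ℝ) ≤ 3/4) : ((W t : I) : ℝ) = 2 * t - 1/2 := by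
  rw [W, pj_coe (by linarith) (by linarith)]

lemma W_eq_zero (t : I) (h : (t:ℝ) ≤ 1/4) : W t = 0 := by
  rw [W]; exact pj_nonpos (by linarith)

lemma W_eq_one (t : I) (h : 3/4 ≤ (t:ℝ)) : W t = 1 := by
  rw [W]; exact pj_ge_one (by linarith)

/-! ### Symmetry of `UContiguous` -/

lemma UContiguous.symm' {Y : Type*} [TopologicalSpace Y] {𝒰 : Set (Set Y)} {x y : Y}
    {a b : Path x y} (h : UContiguous 𝒰 a b) : UContiguous 𝒰 b a := by
  obtain ⟨P, Q, u, a', b', v, U, hU, hran, h1, h2⟩ := h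
  exact ⟨P, Q, u, b', a', v, U, hU, by rwa [Set.union_comm], h2, h1⟩

/-! ### The basic contiguity move -/

lemma move {Y : Type*} [TopologicalSpace Y] {𝒰 : Set (Set Y)} {x y : Y} {p q : Path x y}
    {r s : I} (hr : 0 < (r : ℝ)) (hrs : (r : ℝ) < s) (hs : (s : ℝ) < 1)
    {U : Set Y} (hU : U ∈ 𝒰)
    (hagree : ∀ t : I, ((t:ℝ) ≤ r ∨ (s:ℝ) ≤ t) → p t = q t)
    (hpU : ∀ t : I, (r:ℝ) ≤ t → (t:ℝ) ≤ s → p t ∈ U)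
    (hqU : ∀ t : I, (r:ℝ) ≤ t → (t:ℝ) ≤ s → q t ∈ U) :
    UContiguous 𝒰 p q := by
  have hr0 := r.2.1
  have hs1 := s.2.2
  have hlin_mem : ∀ w : I, (r:ℝ) ≤ lineI r s w ∧ ((lineI r s w : I):ℝ) ≤ s := by
    intro w
    rw [lineI_coe]
    have h0 := w.2.1; have h1 := w.2.2
    constructor <;> nlinarith
  have hlin0 : ∀ w : I, ((lineI 0 r w : I):ℝ) ≤ r := by
    intro w
    rw [lineI_coe, Set.Icc.coe_zero]
    have h0 := w.2.1; have h1 := w.2.2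
    nlinarith
  have hlin1 : ∀ w : I, (s:ℝ) ≤ lineI s 1 w := by
    intro w
    rw [lineI_coe, Set.Icc.coe_one]
    have h0 := w.2.1; have h1 := w.2.2
    nlinarith
  refine ⟨p r, p s, seg0 p r,  seg p r s,
    { toFun := fun w => q (lineI r s w)
      continuous_toFun := q.continuous.comp (continuous_lineI r s)
      source' := by
        show q (lineI r s 0) = p r
        rw [lineI_zero]
        exact (hagree r (Or.inl le_rfl)).symm
      target' := by
        show q (lineI r s 1) = p s
        rw [lineI_one]
        exact (hagree s (Or.inr le_rfl)).symm },
    seg1 p s, U, hU, ?_, ?_, ?_⟩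
  · rintro z (⟨w, rfl⟩ | ⟨w, rfl⟩)
    · exact hpU _ (hlin_mem w).1 (hlin_mem w).2
    · exact hqU _ (hlin_mem w).1 (hlin_mem w).2
  · exact reparam_triple p _ _ _ hr hrs hs (fun w => rfl) (fun w => rfl) (fun w => rfl)
  · exact reparam_triple q _ _ _ hr hrs hs
      (fun w => hagree _ (Or.inl (hlin0 w)))
      (fun w => rfl)
      (fun w => hagree _ (Or.inr (hlin1 w)))

/-! ### The endpoint move: a path is contiguous to its `W`-reparametrization -/

lemma endmove {Y : Type*} [TopologicalSpace Y] {𝒰 : Set (Set Y)}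
    (hopen : ∀ U ∈ 𝒰, IsOpen U) (hcover : ⋃₀ 𝒰 = Set.univ) {x y : Y} (p : Path x y) :
    UContiguous 𝒰 p (p.reparam W W_continuous W_zero W_one) := by
  set half : I := ⟨1/2, by norm_num⟩ with hhalf
  have hmem : p half ∈ ⋃₀ 𝒰 := by rw [hcover]; trivial
  obtain ⟨U, hU, hpU⟩ := hmem
  have hopen' : IsOpen (p ⁻¹' U) := (hopen U hU).preimage p.continuous
  obtain ⟨ε, hε, hball⟩ := Metric.isOpen_iff.mp hopen' half hpU
  set ε' : ℝ := min ε (1/2) with hε'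
  have hε'0 : 0 < ε' := lt_min hε (by norm_num)
  have hε'2 : ε' ≤ 1/2 := min_le_right _ _
  have hε'e : ε' ≤ ε := min_le_left _ _
  set r : I := ⟨1/2 - ε'/4, by constructor <;> linarith⟩ with hrdef
  set s : I := ⟨1/2 + ε'/4, by constructor <;> linarith⟩ with hsdef
  have hrc : (r:ℝ) = 1/2 - ε'/4 := rfl
  have hsc : (s:ℝ) = 1/2 + ε'/4 := rfl
  have hr0 : 0 < (r:ℝ) := by rw [hrc]; linarith
  have hrs : (r:ℝ) < s := by rw [hrc, hsc]; linarith
  have hs1 : (s:ℝ) < 1 := by rw [hsc]; linarith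
  have hseg : ∀ w : I, p (lineI r s w) ∈ U := by
    intro w
    apply hball
    rw [Metric.mem_ball, Subtype.dist_eq, Real.dist_eq, lineI_coe, hrc, hsc]
    have h0 := w.2.1; have h1 := w.2.2
    have hc : ((half : I) : ℝ) = 1/2 := rfl
    rw [hc, abs_lt]
    constructor <;>
      nlinarith [mul_nonneg h0 hε'0.le, mul_nonneg (sub_nonneg.mpr h1) hε'0.le]
  obtain ⟨f, hfc, hfm, hfs, hf0, hf1, hfid⟩ :=
    reparam_triple p (seg0 p r) (seg p r s) (seg1 p s) hr0 hrs hs1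
      (fun w => rfl) (fun w => rfl) (fun w => rfl)
  refine ⟨p r, p s, seg0 p r, seg p r s, seg p r s, seg1 p s, U, hU, ?_, ?_, ?_⟩
  · rintro z (⟨w, rfl⟩ | ⟨w, rfl⟩) <;> exact hseg w
  · exact ⟨f, hfc, hfm, hfs, hf0, hf1, hfid⟩
  · refine ⟨f ∘ W, hfc.comp W_continuous, hfm.comp W_monotone, hfs.comp W_surjective,
      ?_, ?_, ?_⟩
    · rw [Function.comp_apply, W_zero, hf0]
    · rw [Function.comp_apply, W_one, hf1]
    · intro t
      rw [Path.coe_reparam]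
      exact hfid (W t)

/-! ### Paths traced along a homotopy under a height function -/

noncomputable def gammaAux {Y : Type*} [TopologicalSpace Y] {x y : Y} {a b : Path x y}
    (h : Path.Homotopy a b) (φ : I → I) (hφ : Continuous φ) : Path x y where
  toFun t := h (φ t, W t)
  continuous_toFun := h.continuous.comp ((hφ.prodMk W_continuous))
  source' := by show h (φ 0, W 0) = x; rw [W_zero]; exact h.source _
  target' := by show h (φ 1, W 1) = y; rw [W_one]; exact h.target _

@[simp] lemma gammaAux_apply {Y : Type*} [TopologicalSpace Y] {x y : Y} {a b : Path x y}
    (h : Path.Homotopy a b) (φ : I → I) (hφ : Continuous φ) (t : I) :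
    gammaAux h φ hφ t = h (φ t, W t) := rfl

set_option maxHeartbeats 2000000 in
/-- If two paths with the same endpoints are homotopic relative to their endpoints, then they
are `𝒰`-equivalent for any open cover `𝒰` of the space. -/
theorem homotopic_implies_uequiv {Y : Type*} [TopologicalSpace Y] (𝒰 : Set (Set Y))
    (hopen : ∀ U ∈ 𝒰, IsOpen U) (hcover : ⋃₀ 𝒰 = Set.univ)
    {x y : Y} (a b : Path x y) (hab : a.Homotopic b) :
    UEquiv 𝒰 a b := by
  obtain ⟨h⟩ := hab
  -- Lebesgue number setup
  have hcov2 : (Set.univ : Set (I × I)) ⊆ ⋃ U : 𝒰, ⇑h ⁻¹' (U : Set Y) := by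
    intro z _
    have hz : h z ∈ ⋃₀ 𝒰 := by rw [hcover]; trivial
    obtain ⟨U, hU, hzU⟩ := hz
    exact Set.mem_iUnion.2 ⟨⟨U, hU⟩, hzU⟩
  obtain ⟨δ, hδ, hball⟩ := lebesgue_number_lemma_of_metric isCompact_univ
    (fun U : 𝒰 => (hopen U U.2).preimage h.continuous) hcov2
  obtain ⟨n₀, hn₀⟩ := exists_nat_one_div_lt hδ
  set n : ℕ := n₀ + 1 with hn
  have hN : (0:ℝ) < (n:ℝ) := by positivity
  have key : ∀ z : I × I, ∃ U ∈ 𝒰, ∀ w : I × I, dist w z ≤ 1/(n:ℝ) → h w ∈ U := by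
    intro z
    obtain ⟨U, hUb⟩ := hball z trivial
    refine ⟨U, U.2, fun w hw => hUb ?_⟩
    rw [Metric.mem_ball]
    refine lt_of_le_of_lt hw ?_
    rw [hn]
    push_cast
    exact hn₀
  -- the height functions
  set Φ : ℕ → ℕ → I → ℝ := fun i m t =>
    (i:ℝ)/(n:ℝ) + max 0 (min (1/(n:ℝ)) ((m:ℝ)/(n:ℝ) - 2*((W t : I):ℝ))) with hΦdef
  have hΦnn : ∀ i m : ℕ, ∀ t, 0 ≤ Φ i m t := by
    intro i m t
    apply add_nonneg (by positivity) (le_max_left _ _)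
  have hΦub : ∀ i m : ℕ, ∀ t, Φ i m t ≤ ((i:ℝ)+1)/(n:ℝ) := by
    intro i m t
    rw [hΦdef]
    have : max 0 (min (1/(n:ℝ)) ((m:ℝ)/(n:ℝ) - 2*((W t : I):ℝ))) ≤ 1/(n:ℝ) :=
      max_le (by positivity) (min_le_left _ _)
    have e : ((i:ℝ)+1)/(n:ℝ) = (i:ℝ)/(n:ℝ) + 1/(n:ℝ) := by field_simp
    rw [e]
    exact add_le_add_right this _
  have hΦ1 : ∀ i m : ℕ, ∀ t, i + 1 ≤ n → Φ i m t ≤ 1 := by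
    intro i m t hi
    refine le_trans (hΦub i m t) ?_
    rw [div_le_one hN]
    exact_mod_cast hi
  have hΦcoe : ∀ i m : ℕ, ∀ t, i + 1 ≤ n → ((pj (Φ i m t) : I) : ℝ) = Φ i m t := by
    intro i m t hi
    exact pj_coe (hΦnn i m t) (hΦ1 i m t hi)
  have hΦbot : ∀ i : ℕ, ∀ t, Φ i 0 t = (i:ℝ)/(n:ℝ) := by
    intro i t
    have hτ := (W t).2.1
    rw [hΦdef]
    simp only [Nat.cast_zero, zero_div, zero_sub]
    rw [min_eq_right (by linarith [one_div_pos.mpr hN] : -(2*((W t : I):ℝ)) ≤ 1/(n:ℝ)),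
      max_eq_left (by linarith : -(2*((W t : I):ℝ)) ≤ 0), add_zero]
  have hΦtop : ∀ i : ℕ, ∀ t, Φ i (2*n+1) t = ((i:ℝ)+1)/(n:ℝ) := by
    intro i t
    have hτ := (W t).2.2
    have e : ((2*n+1 : ℕ):ℝ)/(n:ℝ) = 2 + 1/(n:ℝ) := by push_cast; field_simp
    rw [hΦdef]
    simp only []
    rw [e, min_eq_left (by linarith), max_eq_right (by positivity)]
    field_simp
  -- the staircase paths
  have hWcoe : Continuous (fun t : I => ((W t : I) : ℝ)) :=
    continuous_subtype_val.comp W_continuous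
  have hΦcont : ∀ i m : ℕ, Continuous (Φ i m) := by
    intro i m
    rw [hΦdef]
    exact continuous_const.add (continuous_const.max
      (continuous_const.min (continuous_const.sub (continuous_const.mul hWcoe))))
  set γP : ℕ → ℕ → Path x y := fun i m =>
    gammaAux h (fun t => pj (Φ i m t)) (continuous_pj.comp (hΦcont i m)) with hγdef
  -- gluing identities
  have hglue : ∀ i : ℕ, γP i (2*n+1) = γP (i+1) 0 := by
    intro i
    ext t
    simp only [hγdef, gammaAux_apply]
    rw [hΦtop i t, hΦbot (i+1) t]
    push_cast
    rfl
  have ha : γP 0 0 = a.reparam W W_continuous W_zero W_one := by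
    ext t
    simp only [hγdef, gammaAux_apply, Path.coe_reparam]
    rw [hΦbot 0 t]
    rw [show ((0:ℕ):ℝ)/(n:ℝ) = 0 by norm_num, pj_zero]
    exact h.apply_zero (W t)
  have hb : γP n 0 = b.reparam W W_continuous W_zero W_one := by
    ext t
    simp only [hγdef, gammaAux_apply, Path.coe_reparam]
    rw [hΦbot n t, div_self hN.ne', pj_one]
    exact h.apply_one (W t)
  -- the basic step
  have step : ∀ i m : ℕ, i + 1 ≤ n → m ≤ 2*n → UContiguous 𝒰 (γP i m) (γP i (m+1)) := by
    intro i m hi hm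
    have hi' : ((i:ℝ)+1) ≤ (n:ℝ) := by exact_mod_cast hi
    have hm' : (m:ℝ) ≤ 2*(n:ℝ) := by exact_mod_cast hm
    set α : ℝ := max 0 (((m:ℝ)-1)/(2*(n:ℝ))) with hα
    set β : ℝ := min 1 (((m:ℝ)+1)/(2*(n:ℝ))) with hβ
    have hα0 : 0 ≤ α := le_max_left _ _
    have hα1 : α < 1 := by
      apply max_lt one_pos
      rw [div_lt_one (by positivity)]
      linarith
    have hβ1 : β ≤ 1 := min_le_left _ _
    have hβ' : β ≤ ((m:ℝ)+1)/(2*(n:ℝ)) := min_le_right _ _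
    have hα' : ((m:ℝ)-1)/(2*(n:ℝ)) ≤ α := le_max_right _ _
    have hαβ : α < β := by
      rcases le_or_gt 1 (((m:ℝ)+1)/(2*(n:ℝ))) with hc | hc
      · rw [hβ, min_eq_left hc]; exact hα1
      · rw [hβ, min_eq_right hc.le]
        apply max_lt (by positivity)
        rw [div_lt_div_iff₀ (by positivity) (by positivity)]
        nlinarith
    have hβα : β - α ≤ 1/(n:ℝ) := by
      have e : ((m:ℝ)+1)/(2*(n:ℝ)) - ((m:ℝ)-1)/(2*(n:ℝ)) = 1/(n:ℝ) := by
        field_simp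
        ring
      linarith
    set r : I := ⟨1/4 + α/2, Set.mem_Icc.mpr ⟨by linarith, by linarith⟩⟩ with hrdef
    set s : I := ⟨1/4 + β/2, Set.mem_Icc.mpr ⟨by linarith, by linarith⟩⟩ with hsdef
    have hrc : (r:ℝ) = 1/4 + α/2 := rfl
    have hsc : (s:ℝ) = 1/4 + β/2 := rfl
    obtain ⟨U, hU, hballU⟩ := key (pj ((i:ℝ)/(n:ℝ)), pj α)
    have hUmem : ∀ m' : ℕ, m' ≤ 2*n + 1 → ∀ t : I, (r:ℝ) ≤ t → (t:ℝ) ≤ s →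
        γP i m' t ∈ U := by
      intro m' hm'' t h1 h2
      simp only [hγdef, gammaAux_apply]
      apply hballU
      rw [Prod.dist_eq]
      rw [hrc] at h1
      rw [hsc] at h2
      have ht14 : 1/4 ≤ (t:ℝ) := by linarith
      have ht34 : (t:ℝ) ≤ 3/4 := by nlinarith
      have hWt : ((W t : I):ℝ) = 2*(t:ℝ) - 1/2 := W_coe t ht14 ht34
      apply max_le
      · rw [Subtype.dist_eq, hΦcoe i m' t hi, pj_coe (by positivity)
          (by rw [div_le_one hN]; exact_mod_cast (by omega : i ≤ n)), Real.dist_eq]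
        rw [hΦdef]
        simp only [add_sub_cancel_left]
        rw [abs_of_nonneg (le_max_left _ _)]
        exact max_le (by positivity) (min_le_left _ _)
      · rw [Subtype.dist_eq, pj_coe hα0 hα1.le, Real.dist_eq, hWt]
        rw [abs_of_nonneg (by linarith)]
        linarith
    refine move (p := γP i m) (q := γP i (m+1)) (r := r) (s := s)
      (by rw [hrc]; linarith) (by rw [hrc, hsc]; linarith) (by rw [hsc]; linarith)
      hU ?_ ?_ ?_
    · -- agreement off (r, s)
      intro t ht
      simp only [hγdef, gammaAux_apply]
      rcases ht with ht | ht
      · rcases le_or_gt (t:ℝ) (1/4) with h14 | h14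
        · rw [W_eq_zero t h14, h.source, h.source]
        · rw [hrc] at ht
          have hW : ((W t : I):ℝ) = 2*(t:ℝ) - 1/2 := W_coe t h14.le (by linarith)
          suffices hEq : Φ i m t = Φ i (m+1) t by rw [hEq]
          have hτpos : 0 < 2*(t:ℝ) - 1/2 := by linarith
          have hτα : 2*(t:ℝ) - 1/2 ≤ α := by linarith
          have hαpos : 0 < α := lt_of_lt_of_le hτpos hτα
          have hαval : α = ((m:ℝ)-1)/(2*(n:ℝ)) := by
            have hge : 0 ≤ ((m:ℝ)-1)/(2*(n:ℝ)) := by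
              by_contra hc
              push_neg at hc
              rw [hα, max_eq_left hc.le] at hαpos
              exact lt_irrefl 0 hαpos
            rw [hα, max_eq_right hge]
          have hdiv : (((m:ℝ)-1)/(2*(n:ℝ)))*2 = ((m:ℝ)-1)/(n:ℝ) := by
            field_simp
          have h2τ : 2*(2*(t:ℝ) - 1/2) ≤ ((m:ℝ)-1)/(n:ℝ) := by
            rw [hαval] at hτα
            nlinarith
          have hmin : ∀ k:ℕ, m ≤ k →
              min (1/(n:ℝ)) ((k:ℝ)/(n:ℝ) - 2*((W t : I):ℝ)) = 1/(n:ℝ) := by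
            intro k hk
            apply min_eq_left
            rw [hW]
            have hkm : (m:ℝ) ≤ (k:ℝ) := by exact_mod_cast hk
            have hkn : ((m:ℝ)-1)/(n:ℝ) + 1/(n:ℝ) ≤ (k:ℝ)/(n:ℝ) := by
              rw [← add_div]
              gcongr
              linarith
            linarith
          rw [hΦdef]
          simp only []
          rw [hmin m le_rfl, hmin (m+1) (by omega)]
      · rcases le_or_gt (3/4:ℝ) (t:ℝ) with h34 | h34
        · rw [W_eq_one t h34, h.target, h.target]
        · rw [hsc] at ht
          have hW : ((W t : I):ℝ) = 2*(t:ℝ) - 1/2 := W_coe t (by linarith [hαβ, hα0]) h34.le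
          suffices hEq : Φ i m t = Φ i (m+1) t by rw [hEq]
          have hτβ : β ≤ 2*(t:ℝ) - 1/2 := by linarith
          have hτ1 : 2*(t:ℝ) - 1/2 < 1 := by linarith
          have hβval : β = ((m:ℝ)+1)/(2*(n:ℝ)) := by
            have hβlt : β < 1 := lt_of_le_of_lt hτβ hτ1
            rcases le_total 1 (((m:ℝ)+1)/(2*(n:ℝ))) with hc | hc
            · rw [hβ, min_eq_left hc] at hβlt
              exact absurd hβlt (lt_irrefl 1)
            · rw [hβ, min_eq_right hc]
          have hdiv : (((m:ℝ)+1)/(2*(n:ℝ)))*2 = ((m:ℝ)+1)/(n:ℝ) := by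
            field_simp
          have h2τ : ((m:ℝ)+1)/(n:ℝ) ≤ 2*(2*(t:ℝ) - 1/2) := by
            rw [hβval] at hτβ
            nlinarith
          have hmax : ∀ k:ℕ, (k:ℝ) ≤ (m:ℝ)+1 →
              max 0 (min (1/(n:ℝ)) ((k:ℝ)/(n:ℝ) - 2*((W t : I):ℝ))) = 0 := by
            intro k hk
            apply max_eq_left
            refine le_trans (min_le_right _ _) ?_
            rw [hW]
            have hkn : (k:ℝ)/(n:ℝ) ≤ ((m:ℝ)+1)/(n:ℝ) := by gcongr
            linarith
          rw [hΦdef]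
          simp only []
          rw [hmax m (by linarith), hmax (m+1) (by push_cast; linarith)]
    · exact fun t h1 h2 => hUmem m (by omega) t h1 h2
    · exact fun t h1 h2 => hUmem (m+1) (by omega) t h1 h2
  -- chain the moves together
  have inner : ∀ i, i + 1 ≤ n → ∀ m, m ≤ 2*n+1 → UEquiv 𝒰 (γP i 0) (γP i m) := by
    intro i hi m
    induction m with
    | zero => exact fun _ => Relation.ReflTransGen.refl
    | succ k ih =>
      intro hk
      exact Relation.ReflTransGen.tail (ih (by omega)) (step i k hi (by omega))
  have outer : ∀ i, i ≤ n → UEquiv 𝒰 (γP 0 0) (γP i 0) := by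
    intro i
    induction i with
    | zero => exact fun _ => Relation.ReflTransGen.refl
    | succ k ih =>
      intro hk
      have h1 := inner k (by omega) (2*n+1) le_rfl
      rw [hglue k] at h1
      exact Relation.ReflTransGen.trans (ih (by omega)) h1
  have main := outer n le_rfl
  rw [ha, hb] at main
  exact Relation.ReflTransGen.trans
    (Relation.ReflTransGen.single (endmove hopen hcover a))
    (Relation.ReflTransGen.trans main
      (Relation.ReflTransGen.single (endmove hopen hcover b).symm'))
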